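/- Let 0 < a ≤ b be real numbers and let λ ∈ [0,1]. Then λ(1−λ)·(a/2)·(log(a/b))² ≤ λa + (1−λ)b − a^λ · b^{1−λ} ≤ λ(1−λ)·(b/2)·(log(a/b))². -/

import Mathlib

open Real

lemma fejer_key (l t : ℝ) (hl0 : 0 ≤ l) (hl1 : l ≤ 1) (ht : 0 ≤ t) :
    l * (1 - l) * t ^ 2 / 2 ≤ l + (1 - l) * Real.exp t - Real.exp ((1 - l) * t) ∧
    l + (1 - l) * Real.exp t - Real.exp ((1 - l) * t)
      ≤ l * (1 - l) * Real.exp t * t ^ 2 / 2 := by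
  have hl' : 0 ≤ 1 - l := by linarith
  -- lower bound
  set g : ℝ → ℝ := fun t => l + (1 - l) * Real.exp t - Real.exp ((1 - l) * t)
      - l * (1 - l) * t ^ 2 / 2 with hgdef
  have hg : ∀ x, HasDerivAt g
      ((1 - l) * Real.exp x - (1 - l) * Real.exp ((1 - l) * x) - l * (1 - l) * x) x := by
    intro x
    have h1 := (Real.hasDerivAt_exp x).const_mul (1 - l)
    have h2 : HasDerivAt (fun x => Real.exp ((1 - l) * x)) ((1 - l) * Real.exp ((1 - l) * x)) x := by
      have := ((hasDerivAt_id x).const_mul (1 - l)).exp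
      simpa [mul_comm] using this
    have h3 : HasDerivAt (fun x : ℝ => l * (1 - l) * x ^ 2 / 2) (l * (1 - l) * x) x := by
      have := ((hasDerivAt_pow 2 x).const_mul (l * (1 - l))).div_const 2
      exact this.congr_deriv (by push_cast; ring)
    have := (((hasDerivAt_const x l).add h1).sub h2).sub h3
    simp only [zero_add] at this
    exact this
  have hmono : MonotoneOn g (Set.Ici 0) := by
    apply monotoneOn_of_deriv_nonneg (convex_Ici 0)
    · exact (Continuous.continuousOn (by continuity))
    · intro x hx
      exact (hg x).differentiableAt.differentiableWithinAt
    · intro x hx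
      rw [(hg x).deriv]
      simp only [Set.mem_Ioi, interior_Ici] at hx
      have hx' : 0 ≤ x := le_of_lt hx
      -- (1-l)*(exp x - exp((1-l)x)) ≥ l(1-l)x
      have h1 : Real.exp ((1 - l) * x) * (l * x) ≤ Real.exp ((1 - l) * x) * (Real.exp (l * x) - 1) := by
        have := Real.add_one_le_exp (l * x)
        nlinarith [Real.exp_pos ((1 - l) * x)]
      have h2 : Real.exp ((1 - l) * x) * (Real.exp (l * x) - 1)
          = Real.exp x - Real.exp ((1 - l) * x) := by
        rw [mul_sub, ← Real.exp_add]; ring_nf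
      have h3 : l * x ≤ Real.exp ((1 - l) * x) * (l * x) := by
        nlinarith [Real.one_le_exp (by positivity : (0:ℝ) ≤ (1 - l) * x),
          mul_nonneg hl0 hx']
      nlinarith
  have hlow := hmono (Set.self_mem_Ici) (Set.mem_Ici.mpr ht) ht
  have g0 : g 0 = 0 := by simp [hgdef]
  constructor
  · have : g t ≥ 0 := by rw [← g0]; exact hlow
    simp only [hgdef] at this; linarith
  · -- upper bound
    set h : ℝ → ℝ := fun t => l * (1 - l) * Real.exp t * t ^ 2 / 2
        - (l + (1 - l) * Real.exp t - Real.exp ((1 - l) * t)) with hhdef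
    have hh : ∀ x, HasDerivAt h
        (l * (1 - l) * (Real.exp x * x ^ 2 + Real.exp x * (2 * x)) / 2
          - ((1 - l) * Real.exp x - (1 - l) * Real.exp ((1 - l) * x))) x := by
      intro x
      have h1 := (Real.hasDerivAt_exp x).const_mul (1 - l)
      have h2 : HasDerivAt (fun x => Real.exp ((1 - l) * x)) ((1 - l) * Real.exp ((1 - l) * x)) x := by
        have := ((hasDerivAt_id x).const_mul (1 - l)).exp
        simpa [mul_comm] using this
      have hp : HasDerivAt (fun x : ℝ => x ^ 2) (2 * x) x := by
        simpa using hasDerivAt_pow 2 x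
      have h4 : HasDerivAt (fun x : ℝ => l * (1 - l) * Real.exp x * x ^ 2 / 2)
          (l * (1 - l) * (Real.exp x * x ^ 2 + Real.exp x * (2 * x)) / 2) x := by
        have h5 : HasDerivAt (fun x : ℝ => l * (1 - l) * (Real.exp x * x ^ 2) / 2)
            (l * (1 - l) * (Real.exp x * x ^ 2 + Real.exp x * (2 * x)) / 2) x :=
          (((Real.hasDerivAt_exp x).mul hp).const_mul (l * (1 - l))).div_const 2
        exact h5.congr_of_eventuallyEq (Filter.Eventually.of_forall fun y => by ring)
      have := h4.sub (((hasDerivAt_const x l).add h1).sub h2)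
      simp only [zero_add] at this
      exact this
    have hmono2 : MonotoneOn h (Set.Ici 0) := by
      apply monotoneOn_of_deriv_nonneg (convex_Ici 0)
      · exact (Continuous.continuousOn (by continuity))
      · intro x hx
        exact (hh x).differentiableAt.differentiableWithinAt
      · intro x hx
        rw [(hh x).deriv]
        simp only [Set.mem_Ioi, interior_Ici] at hx
        have hx' : 0 ≤ x := le_of_lt hx
        -- need (1-l)(exp x - exp((1-l)x)) ≤ l(1-l) exp x (x + x²/2)
        have h2 : Real.exp x - Real.exp ((1 - l) * x) = Real.exp x * (1 - Real.exp (- (l * x))) := by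
          rw [mul_sub, ← Real.exp_add]; ring_nf
        have h1 : 1 - Real.exp (-(l * x)) ≤ l * x := by
          have := Real.add_one_le_exp (-(l * x)); linarith
        have hex := Real.exp_pos x
        nlinarith [mul_le_mul_of_nonneg_left h1 hex.le, Real.exp_pos ((1-l)*x),
          mul_nonneg (mul_nonneg (mul_nonneg hl0 hl') hex.le) (sq_nonneg x)]
    have h0 : h 0 = 0 := by simp [hhdef]
    have := hmono2 (Set.self_mem_Ici) (Set.mem_Ici.mpr ht) ht
    rw [h0] at this
    simp only [hhdef] at this; linarith


/-- Improvement of Young's inequality (5): for `0 < a ≤ b` and `λ ∈ [0,1]`,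
`λ(1−λ)·(a/2)·log²(a/b) ≤ λa+(1−λ)b − a^λ·b^{1−λ} ≤ λ(1−λ)·(b/2)·log²(a/b)`. -/
theorem fejer_stmt_19 (a b : ℝ) (ha : 0 < a) (hab : a ≤ b)
    (l : ℝ) (hl : l ∈ Set.Icc (0 : ℝ) 1) :
    l * (1 - l) * (a / 2) * (Real.log (a / b)) ^ 2
        ≤ l * a + (1 - l) * b - a ^ l * b ^ (1 - l) ∧
    l * a + (1 - l) * b - a ^ l * b ^ (1 - l)
        ≤ l * (1 - l) * (b / 2) * (Real.log (a / b)) ^ 2 := by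
  obtain ⟨hl0, hl1⟩ := hl
  have hb : 0 < b := lt_of_lt_of_le ha hab
  set t := Real.log (b / a) with htdef
  have hba : (1:ℝ) ≤ b / a := (one_le_div ha).mpr hab
  have ht : 0 ≤ t := Real.log_nonneg hba
  have hexp : Real.exp t = b / a := Real.exp_log (by positivity)
  have hlogab : Real.log (a / b) = -t := by
    rw [htdef, ← Real.log_inv, inv_div]
  have hlog : Real.log (a / b) ^ 2 = t ^ 2 := by rw [hlogab]; ring
  have h1 : Real.exp ((1 - l) * t) = (b / a) ^ (1 - l) := by
    rw [Real.rpow_def_of_pos (by positivity), htdef, mul_comm]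
  have habl : a ^ l * b ^ (1 - l) = a * Real.exp ((1 - l) * t) := by
    have h2 : b ^ (1 - l) = a ^ (1 - l) * (b / a) ^ (1 - l) := by
      rw [← Real.mul_rpow ha.le (by positivity)]
      congr 1; field_simp
    rw [h2, h1, ← mul_assoc, ← Real.rpow_add ha]
    simp
  have hbt : b = a * Real.exp t := by rw [hexp]; field_simp
  obtain ⟨k1, k2⟩ := fejer_key l t hl0 hl1 ht
  constructor
  · rw [hlog, habl, hbt]
    nlinarith [mul_le_mul_of_nonneg_left k1 ha.le]
  · rw [hlog, habl, hbt]
    nlinarith [mul_le_mul_of_nonneg_left k2 ha.le]
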